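/- Let V be a finite-dimensional complex inner product space with orthonormal basis e₁,…,e_n, and let v₁,…,v_k ∈ V be pairwise orthogonal vectors. For a function r: {1,…,n} → {1,…,k} and a = (a₁,…,a_k), write r ∼ a if |r⁻¹(i)| = aᵢ for each i. Then ∑_{a₁+⋯+a_k = n} |∑_{r ∼ a} ⟨e₁, v_{r(1)}⟩ ⋯ ⟨e_n, v_{r(n)}⟩|² ≤ ((‖v₁‖² + ⋯ + ‖v_k‖²)/n)^n. -/

import Mathlib

open Finset

section helper

lemma amgm_aux {n : ℕ} (f : Fin n → ℝ) (hf : ∀ i, 0 ≤ f i) :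
    ∏ i, f i ≤ ((∑ i, f i) / n) ^ n := by
  rcases Nat.eq_zero_or_pos n with h | h
  · subst h; simp
  have hn : (0:ℝ) < n := by exact_mod_cast h
  have key := Real.geom_mean_le_arith_mean_weighted Finset.univ (fun _ => (n:ℝ)⁻¹) f
    (fun i _ => by positivity) (by simp; field_simp) (fun i _ => hf i)
  have h2 : (∏ i, f i ^ ((n:ℝ)⁻¹)) ^ (n:ℕ) ≤ (∑ i, (n:ℝ)⁻¹ * f i) ^ (n:ℕ) :=
    pow_le_pow_left₀ (Finset.prod_nonneg fun i _ => Real.rpow_nonneg (hf i) _) key n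
  have h3 : (∏ i, f i ^ ((n:ℝ)⁻¹)) ^ (n:ℕ) = ∏ i, f i := by
    rw [← Finset.prod_pow]
    refine Finset.prod_congr rfl fun i _ => ?_
    rw [← Real.rpow_natCast (f i ^ ((n:ℝ)⁻¹)) n, ← Real.rpow_mul (hf i),
      inv_mul_cancel₀ (ne_of_gt hn), Real.rpow_one]
  rw [h3] at h2
  calc ∏ i, f i ≤ (∑ i, (n:ℝ)⁻¹ * f i) ^ n := h2
    _ = ((∑ i, f i) / n) ^ n := by rw [← Finset.mul_sum]; ring_nf

lemma root_ortho {N : ℕ} (hN : N ≠ 0) {ζ : ℂ} (hζ : IsPrimitiveRoot ζ N) {m₁ m₂ : ℕ}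
    (h₁ : m₁ < N) (h₂ : m₂ < N) :
    ∑ c ∈ Finset.range N, ζ ^ (m₁ * c) * (starRingEnd ℂ) (ζ ^ (m₂ * c)) =
      if m₁ = m₂ then (N : ℂ) else 0 := by
  have hζ1 : ζ ^ N = 1 := hζ.pow_eq_one
  have habs : ‖ζ‖ = 1 := Complex.norm_eq_one_of_pow_eq_one hζ1 hN
  have hz0 : ζ ≠ 0 := fun h0 => by simp [h0] at habs
  have hconj : ∀ m : ℕ, (starRingEnd ℂ) (ζ ^ m) = (ζ ^ m)⁻¹ := fun m => by
    rw [← Complex.inv_eq_conj (by rw [norm_pow, habs, one_pow])]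
  have hterm : ∀ c, ζ ^ (m₁ * c) * (starRingEnd ℂ) (ζ ^ (m₂ * c)) = (ζ ^ m₁ / ζ ^ m₂) ^ c := by
    intro c
    rw [hconj, div_pow, pow_mul, pow_mul, div_eq_mul_inv, ← inv_pow]
  simp_rw [hterm]
  by_cases h : m₁ = m₂
  · subst h
    simp [div_self (pow_ne_zero m₁ hz0)]
  · have hq : ζ ^ m₁ / ζ ^ m₂ ≠ 1 := by
      intro hc
      rw [div_eq_one_iff_eq (pow_ne_zero m₂ hz0)] at hc
      exact h (hζ.pow_inj h₁ h₂ hc)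
    rw [geom_sum_eq hq N, if_neg h]
    have : (ζ ^ m₁ / ζ ^ m₂) ^ N = 1 := by
      rw [div_pow, ← pow_mul, ← pow_mul, mul_comm m₁ N, mul_comm m₂ N, pow_mul, pow_mul, hζ1,
        one_pow, one_pow, div_one]
    rw [this, sub_self, zero_div]

variable {n k : ℕ}

/-- number of preimages of `j` under `r`. -/
def cnt (r : Fin n → Fin k) (j : Fin k) : ℕ := (Finset.univ.filter fun x => r x = j).card

/-- coefficient of the monomial `z^a` in `∏ i, ∑ j, M i j z j`. -/
noncomputable def coef (M : Fin n → Fin k → ℂ) (a : Fin k → ℕ) : ℂ :=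
  ∑ r ∈ Finset.univ.filter (fun r : Fin n → Fin k => ∀ i, cnt r i = a i), ∏ i, M i (r i)

lemma cnt_lt {N : ℕ} (hn : n < N) (r : Fin n → Fin k) (j : Fin k) : cnt r j < N := by
  have : cnt r j ≤ n := by
    simpa [cnt] using Finset.card_filter_le (Finset.univ : Finset (Fin n)) _
  omega

lemma sum_cnt (r : Fin n → Fin k) : ∑ j, cnt r j = n := by
  have := Finset.card_eq_sum_card_fiberwise (s := (univ : Finset (Fin n))) (f := r) (t := univ)
    (fun x _ => Finset.mem_univ _)
  simp only [Finset.card_univ, Fintype.card_fin] at this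
  simp only [cnt]
  omega

lemma prod_cnt {M' : Type*} [CommMonoid M'] (r : Fin n → Fin k) (h : Fin k → M') :
    ∏ i, h (r i) = ∏ j, h j ^ cnt r j := by
  rw [← Finset.prod_fiberwise Finset.univ r (fun i => h (r i))]
  refine Finset.prod_congr rfl fun j _ => ?_
  rw [Finset.prod_congr rfl (fun i hi => by rw [(Finset.mem_filter.mp hi).2]),
    Finset.prod_const]
  rfl

lemma parseval {N : ℕ} (hn : n < N) {ζ : ℂ} (hζ : IsPrimitiveRoot ζ N)
    (M : Fin n → Fin k → ℂ) :
    ∑ t : Fin k → Fin N, ((∏ i, ∑ j, M i j * ζ ^ ((t j : ℕ))) *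
        (starRingEnd ℂ) (∏ i, ∑ j, M i j * ζ ^ ((t j : ℕ))))
      = (N : ℂ) ^ k * ∑ a ∈ Finset.Nat.antidiagonalTuple k n,
          coef M a * (starRingEnd ℂ) (coef M a) := by
  classical
  have hN0 : N ≠ 0 := by omega
  have hF : ∀ t : Fin k → Fin N,
      (∏ i, ∑ j, M i j * ζ ^ ((t j : ℕ)))
        = ∑ r : Fin n → Fin k, (∏ i, M i (r i)) * ∏ j, (ζ ^ ((t j : ℕ))) ^ cnt r j := by
    intro t
    rw [Finset.prod_univ_sum, Fintype.piFinset_univ]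
    refine Finset.sum_congr rfl fun r _ => ?_
    rw [Finset.prod_mul_distrib]
    congr 1
    exact prod_cnt r (fun j => ζ ^ ((t j : ℕ)))
  have hW : ∀ r s : Fin n → Fin k,
      ∑ t : Fin k → Fin N, ((∏ j, (ζ ^ ((t j : ℕ))) ^ cnt r j) *
          (starRingEnd ℂ) (∏ j, (ζ ^ ((t j : ℕ))) ^ cnt s j))
        = if (∀ j, cnt s j = cnt r j) then (N:ℂ)^k else 0 := by
    intro r s
    have h1 : ∀ t : Fin k → Fin N, ((∏ j, (ζ ^ ((t j : ℕ))) ^ cnt r j) *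
          (starRingEnd ℂ) (∏ j, (ζ ^ ((t j : ℕ))) ^ cnt s j))
        = ∏ j, ((ζ ^ ((t j : ℕ))) ^ cnt r j * (starRingEnd ℂ) ((ζ ^ ((t j : ℕ))) ^ cnt s j)) := by
      intro t
      rw [map_prod, Finset.prod_mul_distrib]
    rw [Finset.sum_congr rfl fun t _ => h1 t, ← Fintype.piFinset_univ]
    have hps : ∑ t ∈ Fintype.piFinset (fun _ : Fin k => (univ : Finset (Fin N))),
        ∏ j, ((ζ ^ ((t j : ℕ))) ^ cnt r j * (starRingEnd ℂ) ((ζ ^ ((t j : ℕ))) ^ cnt s j))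
        = ∏ j, ∑ c ∈ (univ : Finset (Fin N)),
            ((ζ ^ ((c : ℕ))) ^ cnt r j * (starRingEnd ℂ) ((ζ ^ ((c : ℕ))) ^ cnt s j)) :=
      (Finset.prod_univ_sum (fun _ : Fin k => (univ : Finset (Fin N)))
        (fun j c => (ζ ^ ((c : ℕ))) ^ cnt r j * (starRingEnd ℂ) ((ζ ^ ((c : ℕ))) ^ cnt s j))).symm
    rw [hps]
    have hj : ∀ j : Fin k, (∑ c : Fin N,
          ((ζ ^ ((c:ℕ))) ^ cnt r j * (starRingEnd ℂ) ((ζ ^ ((c:ℕ))) ^ cnt s j)))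
        = if cnt r j = cnt s j then (N:ℂ) else 0 := by
      intro j
      rw [Fin.sum_univ_eq_sum_range (fun c => (ζ ^ c) ^ cnt r j *
        (starRingEnd ℂ) ((ζ ^ c) ^ cnt s j)) N]
      rw [← root_ortho hN0 hζ (cnt_lt hn r j) (cnt_lt hn s j)]
      refine Finset.sum_congr rfl fun c _ => ?_
      rw [← pow_mul, ← pow_mul, mul_comm (cnt r j) c, mul_comm (cnt s j) c, pow_mul, pow_mul]
    rw [Finset.prod_congr rfl fun j _ => hj j]
    by_cases h : ∀ j, cnt s j = cnt r j
    · rw [if_pos h, Finset.prod_congr rfl (fun j _ => if_pos (h j).symm), Finset.prod_const,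
        Finset.card_univ, Fintype.card_fin]
    · rw [if_neg h]
      push_neg at h
      obtain ⟨j, hjne⟩ := h
      exact Finset.prod_eq_zero (Finset.mem_univ j) (if_neg (fun hh => hjne hh.symm))
  calc ∑ t : Fin k → Fin N, ((∏ i, ∑ j, M i j * ζ ^ ((t j : ℕ))) *
        (starRingEnd ℂ) (∏ i, ∑ j, M i j * ζ ^ ((t j : ℕ))))
      = ∑ t : Fin k → Fin N, ∑ r : Fin n → Fin k, ∑ s : Fin n → Fin k,
          (((∏ i, M i (r i)) * (starRingEnd ℂ) (∏ i, M i (s i))) *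
            ((∏ j, (ζ ^ ((t j : ℕ))) ^ cnt r j) *
              (starRingEnd ℂ) (∏ j, (ζ ^ ((t j : ℕ))) ^ cnt s j))) := by
        refine Finset.sum_congr rfl fun t _ => ?_
        rw [hF t, map_sum, Finset.sum_mul_sum]
        refine Finset.sum_congr rfl fun r _ => Finset.sum_congr rfl fun s _ => ?_
        rw [map_mul]
        ring
    _ = ∑ r : Fin n → Fin k, ∑ s : Fin n → Fin k,
          (((∏ i, M i (r i)) * (starRingEnd ℂ) (∏ i, M i (s i))) *
            ∑ t : Fin k → Fin N, ((∏ j, (ζ ^ ((t j : ℕ))) ^ cnt r j) *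
              (starRingEnd ℂ) (∏ j, (ζ ^ ((t j : ℕ))) ^ cnt s j))) := by
        rw [Finset.sum_comm]
        refine Finset.sum_congr rfl fun r _ => ?_
        rw [Finset.sum_comm]
        refine Finset.sum_congr rfl fun s _ => ?_
        rw [← Finset.mul_sum]
    _ = ∑ r : Fin n → Fin k, (N:ℂ)^k *
          ((∏ i, M i (r i)) * (starRingEnd ℂ) (coef M (cnt r))) := by
        refine Finset.sum_congr rfl fun r _ => ?_
        rw [Finset.sum_congr rfl fun s _ => by rw [hW r s]]
        have h2 : ∀ s : Fin n → Fin k, (((∏ i, M i (r i)) * (starRingEnd ℂ) (∏ i, M i (s i))) *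
              (if (∀ j, cnt s j = cnt r j) then (N:ℂ)^k else 0))
            = (N:ℂ)^k * (if (∀ j, cnt s j = cnt r j) then
                ((∏ i, M i (r i)) * (starRingEnd ℂ) (∏ i, M i (s i))) else 0) := by
          intro s
          split <;> ring
        rw [Finset.sum_congr rfl fun s _ => h2 s, ← Finset.mul_sum, ← Finset.sum_filter]
        congr 1
        rw [coef, map_sum, Finset.mul_sum]
    _ = (N:ℂ)^k * ∑ r : Fin n → Fin k,
          ((∏ i, M i (r i)) * (starRingEnd ℂ) (coef M (cnt r))) := by
        rw [← Finset.mul_sum]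
    _ = (N:ℂ)^k * ∑ a ∈ Finset.Nat.antidiagonalTuple k n,
          coef M a * (starRingEnd ℂ) (coef M a) := by
        congr 1
        rw [← Finset.sum_fiberwise_of_maps_to (g := fun r : Fin n → Fin k => cnt r)
          (t := Finset.Nat.antidiagonalTuple k n)
          (fun r _ => by rw [Finset.Nat.mem_antidiagonalTuple]; exact sum_cnt r)
          (fun r => (∏ i, M i (r i)) * (starRingEnd ℂ) (coef M (cnt r)))]
        refine Finset.sum_congr rfl fun a ha => ?_
        have hfe : (univ.filter (fun r : Fin n → Fin k => cnt r = a))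
            = (univ.filter (fun r : Fin n → Fin k => ∀ i, cnt r i = a i)) := by
          refine Finset.filter_congr fun r _ => ?_
          simp [funext_iff]
        calc ∑ r ∈ univ.filter (fun r : Fin n → Fin k => cnt r = a),
              ((∏ i, M i (r i)) * (starRingEnd ℂ) (coef M (cnt r)))
            = ∑ r ∈ univ.filter (fun r : Fin n → Fin k => cnt r = a),
              ((∏ i, M i (r i)) * (starRingEnd ℂ) (coef M a)) := by
              refine Finset.sum_congr rfl fun r hr => ?_
              rw [(Finset.mem_filter.mp hr).2]
          _ = (∑ r ∈ univ.filter (fun r : Fin n → Fin k => cnt r = a),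
              ∏ i, M i (r i)) * (starRingEnd ℂ) (coef M a) := by
              rw [Finset.sum_mul]
          _ = coef M a * (starRingEnd ℂ) (coef M a) := by
              rw [hfe, coef]

end helper

open Finset in
open Classical in
/-- For an orthonormal basis `e₁,…,eₙ` and pairwise orthogonal vectors
`v₁,…,v_k`, summing over all compositions `a` of `n`:
`∑_a |∑_{r ∼ a} ⟨e₁, v_{r 1}⟩ ⋯ ⟨eₙ, v_{r n}⟩|² ≤ ((‖v₁‖² + ⋯ + ‖v_k‖²)/n)ⁿ`. -/
theorem stmt_11 {V : Type*} [NormedAddCommGroup V] [InnerProductSpace ℂ V]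
    {n k : ℕ} (b : Module.Basis (Fin n) ℂ V) (he : Orthonormal ℂ b)
    (v : Fin k → V) (hv : ∀ i j, i ≠ j → (inner ℂ (v i) (v j) : ℂ) = 0) :
    ∑ a ∈ Finset.Nat.antidiagonalTuple k n,
        ‖∑ r ∈ Finset.univ.filter
            (fun r : Fin n → Fin k =>
              ∀ i, (Finset.univ.filter fun x => r x = i).card = a i),
          ∏ i, (inner ℂ (b i) (v (r i)) : ℂ)‖ ^ 2
      ≤ ((∑ i, ‖v i‖ ^ 2) / n) ^ n := by
  classical
  have key : ∑ a ∈ Finset.Nat.antidiagonalTuple k n,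
      ‖coef (fun i j => (inner ℂ (b i) (v j) : ℂ)) a‖ ^ 2 ≤ ((∑ i, ‖v i‖ ^ 2) / n) ^ n := by
    set M : Fin n → Fin k → ℂ := fun i j => (inner ℂ (b i) (v j) : ℂ) with hM
    set X : ℝ := ∑ i, ‖v i‖ ^ 2 with hX
    set N : ℕ := n + 1 with hNdef
    have hn : n < N := Nat.lt_succ_self n
    have hN0 : N ≠ 0 := by omega
    set ζ : ℂ := Complex.exp (2 * Real.pi * Complex.I / N) with hzdef
    have hζ : IsPrimitiveRoot ζ N := Complex.isPrimitiveRoot_exp N hN0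
    have habs : ‖ζ‖ = 1 := Complex.norm_eq_one_of_pow_eq_one hζ.pow_eq_one hN0
    have e1 : ∀ z : ℂ, ((‖z‖ : ℂ))^2 = z * (starRingEnd ℂ) z := by
      intro z
      rw [Complex.mul_conj]
      norm_cast
      rw [Complex.sq_norm]
    have hzc : ∀ m : ℕ, ((ζ ^ m) * (starRingEnd ℂ) (ζ ^ m)) = 1 := by
      intro m
      rw [← e1 (ζ ^ m), norm_pow, habs, one_pow]
      norm_num
    have hcol : ∀ j l : Fin k, ∑ i, M i j * (starRingEnd ℂ) (M i l)
        = (inner ℂ (v l) (v j) : ℂ) := by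
      intro j l
      have h2 := (b.toOrthonormalBasis he).sum_inner_mul_inner (v l) (v j)
      rw [Module.Basis.coe_toOrthonormalBasis] at h2
      rw [← h2]
      refine Finset.sum_congr rfl fun i _ => ?_
      simp only [hM]
      rw [← inner_conj_symm (v l) (b i)]
      ring
    have hrow : ∀ t : Fin k → Fin N, ∑ i, ‖∑ j, M i j * ζ ^ ((t j : ℕ))‖ ^ 2 = X := by
      intro t
      have hcplx : (∑ i, ((∑ j, M i j * ζ ^ ((t j : ℕ))) *
          (starRingEnd ℂ) (∑ j, M i j * ζ ^ ((t j : ℕ))))) = (X : ℂ) := by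
        have expand : ∀ i : Fin n, ((∑ j, M i j * ζ ^ ((t j : ℕ))) *
            (starRingEnd ℂ) (∑ j, M i j * ζ ^ ((t j : ℕ))))
            = ∑ j, ∑ l, ((ζ ^ ((t j : ℕ)) * (starRingEnd ℂ) (ζ ^ ((t l : ℕ)))) *
                (M i j * (starRingEnd ℂ) (M i l))) := by
          intro i
          rw [map_sum, Finset.sum_mul_sum]
          refine Finset.sum_congr rfl fun j _ => Finset.sum_congr rfl fun l _ => ?_
          rw [map_mul]
          ring
        calc (∑ i, ((∑ j, M i j * ζ ^ ((t j : ℕ))) *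
            (starRingEnd ℂ) (∑ j, M i j * ζ ^ ((t j : ℕ)))))
            = ∑ i, ∑ j, ∑ l, ((ζ ^ ((t j : ℕ)) * (starRingEnd ℂ) (ζ ^ ((t l : ℕ)))) *
                (M i j * (starRingEnd ℂ) (M i l))) := Finset.sum_congr rfl fun i _ => expand i
          _ = ∑ j, ∑ l, ((ζ ^ ((t j : ℕ)) * (starRingEnd ℂ) (ζ ^ ((t l : ℕ)))) *
                ∑ i, (M i j * (starRingEnd ℂ) (M i l))) := by
              rw [Finset.sum_comm]
              refine Finset.sum_congr rfl fun j _ => ?_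
              rw [Finset.sum_comm]
              refine Finset.sum_congr rfl fun l _ => ?_
              rw [← Finset.mul_sum]
          _ = ∑ j, ((ζ ^ ((t j : ℕ)) * (starRingEnd ℂ) (ζ ^ ((t j : ℕ)))) *
                (inner ℂ (v j) (v j) : ℂ)) := by
              refine Finset.sum_congr rfl fun j _ => ?_
              rw [Finset.sum_eq_single j]
              · rw [hcol]
              · intro l _ hlj
                rw [hcol, hv l j hlj, mul_zero]
              · intro hmem
                exact absurd (Finset.mem_univ j) hmem
          _ = ∑ j, ((‖v j‖ : ℂ))^2 := by
              refine Finset.sum_congr rfl fun j _ => ?_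
              rw [hzc, one_mul, inner_self_eq_norm_sq_to_K]
              norm_num
          _ = (X : ℂ) := by
              rw [hX]
              push_cast
              rfl
      have hcast : ((∑ i, ‖∑ j, M i j * ζ ^ ((t j : ℕ))‖ ^ 2 : ℝ) : ℂ) = (X : ℂ) := by
        rw [← hcplx]
        push_cast
        exact Finset.sum_congr rfl fun i _ => e1 _
      exact_mod_cast hcast
    have hFt : ∀ t : Fin k → Fin N,
        ‖∏ i, ∑ j, M i j * ζ ^ ((t j : ℕ))‖ ^ 2 ≤ (X / n) ^ n := by
      intro t
      have h1 : ‖∏ i, ∑ j, M i j * ζ ^ ((t j : ℕ))‖ ^ 2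
          = ∏ i, ‖∑ j, M i j * ζ ^ ((t j : ℕ))‖ ^ 2 := by
        rw [norm_prod, ← Finset.prod_pow]
      rw [h1, ← hrow t]
      exact amgm_aux _ (fun i => by positivity)
    have hpar := parseval hn hζ M
    have hreal : (N:ℝ)^k * ∑ a ∈ Finset.Nat.antidiagonalTuple k n, ‖coef M a‖^2
        = ∑ t : Fin k → Fin N, ‖∏ i, ∑ j, M i j * ζ ^ ((t j : ℕ))‖^2 := by
      refine Complex.ofReal_injective ?_
      calc (((N:ℝ)^k * ∑ a ∈ Finset.Nat.antidiagonalTuple k n, ‖coef M a‖^2 : ℝ) : ℂ)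
          = (N:ℂ)^k * ∑ a ∈ Finset.Nat.antidiagonalTuple k n,
              coef M a * (starRingEnd ℂ) (coef M a) := by
            push_cast
            congr 1
            exact Finset.sum_congr rfl fun a _ => e1 _
        _ = ∑ t : Fin k → Fin N, ((∏ i, ∑ j, M i j * ζ ^ ((t j : ℕ))) *
              (starRingEnd ℂ) (∏ i, ∑ j, M i j * ζ ^ ((t j : ℕ)))) := hpar.symm
        _ = ((∑ t : Fin k → Fin N, ‖∏ i, ∑ j, M i j * ζ ^ ((t j : ℕ))‖^2 : ℝ) : ℂ) := by
            push_cast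
            exact Finset.sum_congr rfl fun t _ => (e1 _).symm
    have hsum : ∑ t : Fin k → Fin N, ‖∏ i, ∑ j, M i j * ζ ^ ((t j : ℕ))‖^2
        ≤ (N:ℝ)^k * (X/n)^n := by
      calc ∑ t : Fin k → Fin N, ‖∏ i, ∑ j, M i j * ζ ^ ((t j : ℕ))‖^2
          ≤ ∑ _t : Fin k → Fin N, (X/n)^n := Finset.sum_le_sum fun t _ => hFt t
        _ = (N:ℝ)^k * (X/n)^n := by
            rw [Finset.sum_const, Finset.card_univ]
            simp [Fintype.card_fin, nsmul_eq_mul]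
    have hpow : (0:ℝ) < (N:ℝ)^k := by positivity
    exact le_of_mul_le_mul_left (hreal.le.trans hsum) hpow
  simp only [coef, cnt] at key
  convert key
  ext r
  simp only [Finset.mem_filter, Finset.mem_univ, true_and]
  exact ⟨fun h => Finset.mem_filter.2 ⟨Finset.mem_univ _, fun i => by convert h i using 3⟩,
    fun h i => by convert (Finset.mem_filter.1 h).2 i using 3⟩
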